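/- Let p = (τ,R) be a mesh pattern of length k whose entire top row is shaded, i.e. {(0,k),(1,k),…,(k,k)} ⊆ R. Then for every n, a permutation π of length n avoids p if and only if its up-shift π↑ avoids the up-shift p↑. Consequently |S_n(p)| = |S_n(p↑)| for all n, i.e. p and p↑ are Wilf-equivalent. -/

import Mathlib

/-- 1-based position boundaries of an occurrence: `posOf x 0 = 0`,
`posOf x i = x_i` (1-based) for `1 ≤ i ≤ k`, and `posOf x i = n+1` for `i > k`. -/
def posOf {k n : ℕ} (x : Fin k → Fin n) (i : ℕ) : ℕ :=
  if h : 1 ≤ i ∧ i ≤ k then (x ⟨i - 1, by omega⟩ : ℕ) + 1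
  else if i = 0 then 0 else n + 1

/-- 1-based value boundaries of an occurrence: `valOf τ x π 0 = 0`,
`valOf τ x π j = y_j`, the `j`-th smallest of the values `π(x_1),…,π(x_k)`
(which equals `π(x_{τ⁻¹(j)})` for an occurrence of the classical pattern `τ`),
and `n+1` for `j > k`. -/
def valOf {k n : ℕ} (τ : Equiv.Perm (Fin k)) (x : Fin k → Fin n)
    (π : Equiv.Perm (Fin n)) (j : ℕ) : ℕ :=
  if h : 1 ≤ j ∧ j ≤ k then (π (x (τ.symm ⟨j - 1, by omega⟩)) : ℕ) + 1
  else if j = 0 then 0 else n + 1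

/-- `π` (a permutation of length `n`, 0-indexed via `Fin n`) contains the mesh
pattern `(τ, R)`, where boxes in `R` are given with 0-based coordinates in `[0,k]²`.
All positions/values are converted to 1-based via `+1`. -/
def MeshOccursIn {k n : ℕ} (τ : Equiv.Perm (Fin k)) (R : Set (ℕ × ℕ))
    (π : Equiv.Perm (Fin n)) : Prop :=
  ∃ x : Fin k → Fin n, StrictMono x ∧
    (∀ a b : Fin k, π (x a) < π (x b) ↔ τ a < τ b) ∧
    ∀ r ∈ R, ∀ z : Fin n,
      ¬ (posOf x r.1 < (z : ℕ) + 1 ∧ (z : ℕ) + 1 < posOf x (r.1 + 1) ∧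
         valOf τ x π r.2 < (π z : ℕ) + 1 ∧ (π z : ℕ) + 1 < valOf τ x π (r.2 + 1))

/-- `π` avoids the mesh pattern `(τ, R)`. -/
def MeshAvoids {k n : ℕ} (τ : Equiv.Perm (Fin k)) (R : Set (ℕ × ℕ))
    (π : Equiv.Perm (Fin n)) : Prop := ¬ MeshOccursIn τ R π

/-- If the whole top row of the mesh pattern `(τ, R)` of length `k`
is shaded, then a permutation `π` avoids `(τ, R)` iff its up-shift
(`finRotate n * π`, i.e. `i ↦ (π i mod n) + 1` in 1-based terms) avoids the
up-shifted pattern `(τ↑, R↑)`; consequently `(τ,R)` and `(τ↑,R↑)` are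
Wilf-equivalent. -/
lemma posOf_zero {k n : ℕ} (x : Fin k → Fin n) : posOf x 0 = 0 := by simp [posOf]

lemma posOf_of {k n : ℕ} (x : Fin k → Fin n) {i : ℕ} (h1 : 1 ≤ i) (h2 : i ≤ k) :
    posOf x i = (x ⟨i - 1, by omega⟩ : ℕ) + 1 := by
  rw [posOf, dif_pos ⟨h1, h2⟩]

lemma posOf_top {k n : ℕ} (x : Fin k → Fin n) {i : ℕ} (h : k < i) :
    posOf x i = n + 1 := by
  have h1 : ¬ (1 ≤ i ∧ i ≤ k) := by omega
  have h2 : i ≠ 0 := by omega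
  rw [posOf, dif_neg h1, if_neg h2]

lemma valOf_zero {k n : ℕ} (τ : Equiv.Perm (Fin k)) (x : Fin k → Fin n)
    (π : Equiv.Perm (Fin n)) : valOf τ x π 0 = 0 := by simp [valOf]

lemma valOf_of {k n : ℕ} (τ : Equiv.Perm (Fin k)) (x : Fin k → Fin n)
    (π : Equiv.Perm (Fin n)) {j : ℕ} (h1 : 1 ≤ j) (h2 : j ≤ k) :
    valOf τ x π j = (π (x (τ.symm ⟨j - 1, by omega⟩)) : ℕ) + 1 := by
  rw [valOf, dif_pos ⟨h1, h2⟩]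

lemma valOf_top {k n : ℕ} (τ : Equiv.Perm (Fin k)) (x : Fin k → Fin n)
    (π : Equiv.Perm (Fin n)) {j : ℕ} (h : k < j) : valOf τ x π j = n + 1 := by
  have h1 : ¬ (1 ≤ j ∧ j ≤ k) := by omega
  have h2 : j ≠ 0 := by omega
  rw [valOf, dif_neg h1, if_neg h2]

lemma valOf_le {k n : ℕ} (τ : Equiv.Perm (Fin k)) (x : Fin k → Fin n)
    (π : Equiv.Perm (Fin n)) {j : ℕ} (h : j ≤ k) : valOf τ x π j ≤ n := by
  rcases Nat.eq_zero_or_pos j with h0 | h0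
  · simp [h0, valOf_zero]
  · rw [valOf_of τ x π h0 h]
    exact (π (x (τ.symm ⟨j - 1, by omega⟩))).isLt

lemma finRotate_val {n : ℕ} (v : Fin n) :
    ((finRotate n) v : ℕ) = if (v : ℕ) + 1 = n then 0 else (v : ℕ) + 1 := by
  cases n with
  | zero => exact v.elim0
  | succ m =>
    rw [finRotate_succ_apply, Fin.val_add_one]
    by_cases h : v = Fin.last m
    · simp [h]
    · have h2 : (v:ℕ) + 1 ≠ m + 1 := by
        intro hc
        exact h (Fin.ext (by rw [Fin.val_last]; omega))
      simp [h, h2]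
      omega

lemma mem_iff_lt_card {k : ℕ} (S : Finset (Fin k))
    (hS : ∀ a b : Fin k, b ≤ a → a ∈ S → b ∈ S) (a : Fin k) :
    a ∈ S ↔ (a : ℕ) < S.card := by
  constructor
  · intro ha
    have h1 : Finset.Iic a ⊆ S := fun b hb => hS a b (Finset.mem_Iic.mp hb) ha
    have h2 := Finset.card_le_card h1
    rw [Fin.card_Iic] at h2
    omega
  · intro h
    by_contra ha
    have h1 : S ⊆ Finset.Iio a := fun b hb => by
      rw [Finset.mem_Iio]
      rcases lt_or_ge b a with h' | h'
      · exact h'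
      · exact absurd (hS b a h' hb) ha
    have h2 := Finset.card_le_card h1
    rw [Fin.card_Iio] at h2
    omega

/-- Any point not among the `x a` lies in some position gap. -/
lemma exists_gap {k n : ℕ} (x : Fin k → Fin n) (hx : StrictMono x)
    (z : Fin n) (hz : ∀ a, x a ≠ z) :
    ∃ i ≤ k, posOf x i < (z : ℕ) + 1 ∧ (z : ℕ) + 1 < posOf x (i + 1) := by
  classical
  set S := Finset.univ.filter (fun a => (x a : ℕ) < (z : ℕ)) with hSdef
  have hin : ∀ a : Fin k, a ∈ S ↔ (x a : ℕ) < (z : ℕ) := by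
    intro a; rw [hSdef]; simp
  have hlow : ∀ a b : Fin k, b ≤ a → a ∈ S → b ∈ S := by
    intro a b hba ha
    rw [hin] at ha ⊢
    have hmono : (x b : ℕ) ≤ (x a : ℕ) := hx.monotone hba
    omega
  have hmem : ∀ a : Fin k, a ∈ S ↔ (a : ℕ) < S.card := mem_iff_lt_card S hlow
  have hcard : S.card ≤ k := le_trans (Finset.card_le_univ S) (by simp)
  refine ⟨S.card, hcard, ?_, ?_⟩
  · rcases Nat.eq_zero_or_pos S.card with h0 | h0
    · rw [h0, posOf_zero]; omega
    · rw [posOf_of x h0 hcard]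
      have h1 : (x ⟨S.card - 1, by omega⟩ : ℕ) < (z : ℕ) := by
        rw [← hin]
        refine (hmem _).mpr ?_
        show S.card - 1 < S.card
        omega
      omega
  · rcases Nat.lt_or_ge S.card k with hk | hk
    · rw [posOf_of x (by omega) (by omega)]
      have h1 : ¬ (x ⟨S.card + 1 - 1, by omega⟩ : ℕ) < (z : ℕ) := by
        rw [← hin]
        rw [hmem]
        simp
      have hne : x ⟨S.card + 1 - 1, by omega⟩ ≠ z := hz _
      have h2 : (x ⟨S.card + 1 - 1, by omega⟩ : ℕ) ≠ (z : ℕ) := fun hc => hne (Fin.ext hc)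
      omega
    · have hek : S.card = k := le_antisymm hcard hk
      rw [hek, posOf_top x (by omega)]
      omega

lemma rot_symm_zero {k : ℕ} (τ : Equiv.Perm (Fin k)) (hk : 1 ≤ k) :
    (finRotate k * τ).symm ⟨0, by omega⟩ = τ.symm ⟨k - 1, by omega⟩ := by
  rw [Equiv.symm_apply_eq]
  apply Fin.ext
  rw [Equiv.Perm.mul_apply, Equiv.apply_symm_apply, finRotate_val]
  show (0 : ℕ) = if (k - 1) + 1 = k then 0 else (k - 1) + 1
  rw [if_pos (by omega)]

lemma rot_symm_mid {k : ℕ} (τ : Equiv.Perm (Fin k)) {j : ℕ} (h1 : 1 ≤ j) (h2 : j < k) :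
    (finRotate k * τ).symm ⟨j, by omega⟩ = τ.symm ⟨j - 1, by omega⟩ := by
  rw [Equiv.symm_apply_eq]
  apply Fin.ext
  rw [Equiv.Perm.mul_apply, Equiv.apply_symm_apply, finRotate_val]
  show (j : ℕ) = if (j - 1) + 1 = k then 0 else (j - 1) + 1
  rw [if_neg (by omega)]
  omega

lemma sigma_x_val {k n : ℕ} (τ : Equiv.Perm (Fin k)) (π : Equiv.Perm (Fin n)) (hk : 1 ≤ k)
    (x : Fin k → Fin n) (hx : Function.Injective x)
    (hm : (π (x (τ.symm ⟨k - 1, by omega⟩)) : ℕ) + 1 = n) (a : Fin k) :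
    ((finRotate n * π) (x a) : ℕ) =
      if a = τ.symm ⟨k - 1, by omega⟩ then 0 else (π (x a) : ℕ) + 1 := by
  rw [Equiv.Perm.mul_apply, finRotate_val]
  by_cases ha : a = τ.symm ⟨k - 1, by omega⟩
  · rw [if_pos ha, if_pos (ha ▸ hm)]
  · have hne : π (x a) ≠ π (x (τ.symm ⟨k - 1, by omega⟩)) := by
      intro h
      exact ha (hx (π.injective h))
    have hne2 : (π (x a) : ℕ) + 1 ≠ n := by
      intro hc
      exact hne (Fin.ext (by omega))
    rw [if_neg hne2, if_neg ha]

lemma tau_rot_val {k : ℕ} (τ : Equiv.Perm (Fin k)) (hk : 1 ≤ k) (a : Fin k) :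
    ((finRotate k * τ) a : ℕ) =
      if a = τ.symm ⟨k - 1, by omega⟩ then 0 else (τ a : ℕ) + 1 := by
  rw [Equiv.Perm.mul_apply, finRotate_val]
  by_cases ha : a = τ.symm ⟨k - 1, by omega⟩
  · rw [if_pos ha, if_pos (by rw [ha, Equiv.apply_symm_apply]; show k - 1 + 1 = k; omega)]
  · have hne : (τ a : ℕ) + 1 ≠ k := by
      intro hc
      apply ha
      have h2 : τ a = ⟨k - 1, by omega⟩ := Fin.ext (by show (τ a : ℕ) = k - 1; omega)
      rw [← h2, Equiv.symm_apply_apply]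
    rw [if_neg hne, if_neg ha]

lemma core_ord {k n : ℕ} (τ : Equiv.Perm (Fin k)) (π : Equiv.Perm (Fin n)) (hk : 1 ≤ k)
    (x : Fin k → Fin n) (hx : Function.Injective x)
    (hm : (π (x (τ.symm ⟨k - 1, by omega⟩)) : ℕ) + 1 = n) (a b : Fin k) :
    ((finRotate n * π) (x a) < (finRotate n * π) (x b) ↔
      (finRotate k * τ) a < (finRotate k * τ) b) ↔
    (π (x a) < π (x b) ↔ τ a < τ b) := by
  have hτm : (τ (τ.symm ⟨k - 1, by omega⟩) : ℕ) = k - 1 := by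
    rw [Equiv.apply_symm_apply]
  have haux1 : ∀ c : Fin k, c ≠ τ.symm ⟨k - 1, by omega⟩ → (π (x c) : ℕ) < n - 1 := by
    intro c hc
    have h1 : π (x c) ≠ π (x (τ.symm ⟨k - 1, by omega⟩)) := fun h => hc (hx (π.injective h))
    have h2 : (π (x c) : ℕ) ≠ (π (x (τ.symm ⟨k - 1, by omega⟩)) : ℕ) := fun h => h1 (Fin.ext h)
    have h3 := (π (x c)).isLt
    omega
  have haux2 : ∀ c : Fin k, c ≠ τ.symm ⟨k - 1, by omega⟩ → (τ c : ℕ) < k - 1 := by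
    intro c hc
    have h1 : τ c ≠ τ (τ.symm ⟨k - 1, by omega⟩) := fun h => hc (τ.injective h)
    have h2 : (τ c : ℕ) ≠ (τ (τ.symm ⟨k - 1, by omega⟩) : ℕ) := fun h => h1 (Fin.ext h)
    have h3 := (τ c).isLt
    omega
  have e1 := sigma_x_val τ π hk x hx hm a
  have e2 := sigma_x_val τ π hk x hx hm b
  have e3 := tau_rot_val τ hk a
  have e4 := tau_rot_val τ hk b
  simp only [Fin.lt_def]
  rcases eq_or_ne a (τ.symm ⟨k - 1, by omega⟩) with ha | ha <;>
    rcases eq_or_ne b (τ.symm ⟨k - 1, by omega⟩) with hb | hb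
  · rw [if_pos ha] at e1 e3
    rw [if_pos hb] at e2 e4
    have hab : a = b := ha.trans hb.symm
    subst hab
    omega
  · rw [if_pos ha] at e1 e3
    rw [if_neg hb] at e2 e4
    have h1 := haux1 b hb; have h2 := haux2 b hb
    have h3 : (π (x a) : ℕ) + 1 = n := ha ▸ hm
    have h4 : (τ a : ℕ) = k - 1 := by rw [ha]; exact hτm
    omega
  · rw [if_neg ha] at e1 e3
    rw [if_pos hb] at e2 e4
    have h1 := haux1 a ha; have h2 := haux2 a ha
    have h3 : (π (x b) : ℕ) + 1 = n := hb ▸ hm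
    have h4 : (τ b : ℕ) = k - 1 := by rw [hb]; exact hτm
    omega
  · rw [if_neg ha] at e1 e3
    rw [if_neg hb] at e2 e4
    omega

lemma core_val {k n : ℕ} (τ : Equiv.Perm (Fin k)) (π : Equiv.Perm (Fin n)) (hk : 1 ≤ k)
    (x : Fin k → Fin n) (hx : Function.Injective x)
    (hm : (π (x (τ.symm ⟨k - 1, by omega⟩)) : ℕ) + 1 = n)
    {j : ℕ} (hj : j ≤ k) :
    valOf (finRotate k * τ) x (finRotate n * π) (j + 1) = valOf τ x π j + 1 := by
  rcases Nat.eq_zero_or_pos j with rfl | hj1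
  · rw [valOf_zero, valOf_of _ x _ le_rfl hk]
    have hs : (finRotate k * τ).symm ⟨0 + 1 - 1, by omega⟩ = τ.symm ⟨k - 1, by omega⟩ :=
      rot_symm_zero τ hk
    rw [hs, sigma_x_val τ π hk x hx hm, if_pos rfl]
  · rcases Nat.lt_or_ge j k with hjk | hjk
    · rw [valOf_of _ x _ (by omega) (by omega), valOf_of τ x π hj1 hj]
      have hs : (finRotate k * τ).symm ⟨j + 1 - 1, by omega⟩ = τ.symm ⟨j - 1, by omega⟩ :=
        rot_symm_mid τ hj1 hjk
      rw [hs]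
      have hne : τ.symm ⟨j - 1, by omega⟩ ≠ τ.symm ⟨k - 1, by omega⟩ := by
        intro hc
        have h2 : (⟨j - 1, by omega⟩ : Fin k) = ⟨k - 1, by omega⟩ := τ.symm.injective hc
        have h3 := congrArg Fin.val h2
        simp only at h3
        omega
      rw [sigma_x_val τ π hk x hx hm, if_neg hne]
    · have hjk' : j = k := le_antisymm hj hjk
      rw [hjk']
      rw [valOf_top _ x _ (by omega), valOf_of τ x π (by omega) le_rfl]
      rw [show (π (x (τ.symm ⟨k - 1, by omega⟩)) : ℕ) + 1 = n from hm]

lemma core_box {k n : ℕ} (τ : Equiv.Perm (Fin k)) (π : Equiv.Perm (Fin n)) (hk : 1 ≤ k)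
    (x : Fin k → Fin n) (hx : Function.Injective x)
    (hm : (π (x (τ.symm ⟨k - 1, by omega⟩)) : ℕ) + 1 = n)
    {a b : ℕ} (ha : a ≤ k) (hb : b ≤ k) :
    (∀ z : Fin n, ¬ (posOf x a < (z : ℕ) + 1 ∧ (z : ℕ) + 1 < posOf x (a + 1) ∧
        valOf τ x π b < (π z : ℕ) + 1 ∧ (π z : ℕ) + 1 < valOf τ x π (b + 1))) ↔
    (∀ z : Fin n, ¬ (posOf x a < (z : ℕ) + 1 ∧ (z : ℕ) + 1 < posOf x (a + 1) ∧
        valOf (finRotate k * τ) x (finRotate n * π) ((b + 1) % (k + 1)) <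
          ((finRotate n * π) z : ℕ) + 1 ∧
        ((finRotate n * π) z : ℕ) + 1 <
          valOf (finRotate k * τ) x (finRotate n * π) ((b + 1) % (k + 1) + 1))) := by
  rcases Nat.lt_or_ge b k with hbk | hbk
  · have hmod : (b + 1) % (k + 1) = b + 1 := Nat.mod_eq_of_lt (by omega)
    rw [hmod]
    rw [core_val τ π hk x hx hm (show b ≤ k by omega),
        core_val τ π hk x hx hm (show b + 1 ≤ k by omega)]
    refine forall_congr' fun z => not_congr ?_
    have hv1 : valOf τ x π (b + 1) ≤ n := valOf_le τ x π (by omega)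
    have hσz : ((finRotate n * π) z : ℕ) =
        if (π z : ℕ) + 1 = n then 0 else (π z : ℕ) + 1 := by
      rw [Equiv.Perm.mul_apply, finRotate_val]
    by_cases hzc : (π z : ℕ) + 1 = n
    · rw [hσz, if_pos hzc]
      omega
    · rw [hσz, if_neg hzc]
      omega
  · have hbk' : b = k := le_antisymm hb hbk
    have hmod : (b + 1) % (k + 1) = 0 := by rw [hbk']; exact Nat.mod_self (k + 1)
    refine iff_of_true ?_ ?_
    · rintro z ⟨-, -, h3, h4⟩
      rw [hbk', valOf_of τ x π hk le_rfl] at h3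
      have hzn := (π z).isLt
      rw [show (π (x (τ.symm ⟨k - 1, by omega⟩)) : ℕ) + 1 = n from hm] at h3
      omega
    · rintro z ⟨-, -, h3, h4⟩
      rw [hmod] at h3 h4
      have h5 : valOf (finRotate k * τ) x (finRotate n * π) (0 + 1) = valOf τ x π 0 + 1 :=
        core_val τ π hk x hx hm (by omega)
      rw [valOf_zero] at h5
      rw [h5] at h4
      rw [valOf_zero] at h3
      omega

lemma occurs_zero {n : ℕ} (τ0 : Equiv.Perm (Fin 0)) (R0 : Set (ℕ × ℕ))
    (h0 : ((0 : ℕ), (0 : ℕ)) ∈ R0) (ρ : Equiv.Perm (Fin n)) :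
    MeshOccursIn τ0 R0 ρ ↔ n = 0 := by
  constructor
  · rintro ⟨x, -, -, hbox⟩
    by_contra hn
    refine hbox ((0 : ℕ), (0 : ℕ)) h0 ⟨0, by omega⟩ ?_
    refine ⟨?_, ?_, ?_, ?_⟩
    · rw [posOf_zero]; omega
    · rw [posOf_top x (by omega)]; omega
    · rw [valOf_zero]; omega
    · rw [valOf_top τ0 x ρ (by omega)]
      have := (ρ ⟨0, by omega⟩).isLt
      omega
  · intro hn
    subst hn
    refine ⟨fun a => a.elim0, fun a => a.elim0, fun a => a.elim0, fun r hr z => z.elim0⟩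

set_option maxHeartbeats 1000000 in
lemma occurs_fwd {k n : ℕ} (τ : Equiv.Perm (Fin k)) (R : Set (ℕ × ℕ))
    (hR : ∀ r ∈ R, r.1 ≤ k ∧ r.2 ≤ k)
    (htop : ∀ i ≤ k, (i, k) ∈ R) (π : Equiv.Perm (Fin n)) (hk : 1 ≤ k)
    (h : MeshOccursIn τ R π) :
    MeshOccursIn (finRotate k * τ)
      ((fun r : ℕ × ℕ => (r.1, (r.2 + 1) % (k + 1))) '' R) (finRotate n * π) := by
  obtain ⟨x, hx, hord, hbox⟩ := h
  have hk1 : k - 1 < k := by omega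
  have hmax : ∀ a : Fin k, (π (x a) : ℕ) ≤ (π (x (τ.symm ⟨k - 1, hk1⟩)) : ℕ) := by
    intro a
    by_contra h
    have hlt : π (x (τ.symm ⟨k - 1, hk1⟩)) < π (x a) := by
      rw [Fin.lt_def]; omega
    have h2 := (hord _ _).mp hlt
    rw [Equiv.apply_symm_apply] at h2
    have h3 := (τ a).isLt
    rw [Fin.lt_def] at h2
    simp only at h2
    omega
  have hn1 : 1 ≤ n := (x (τ.symm ⟨k - 1, hk1⟩)).pos
  have hn0 : n - 1 < n := by omega
  have hm : (π (x (τ.symm ⟨k - 1, hk1⟩)) : ℕ) + 1 = n := by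
    by_contra hc
    have hlt : (π (x (τ.symm ⟨k - 1, hk1⟩)) : ℕ) + 1 < n := by
      have := (π (x (τ.symm ⟨k - 1, hk1⟩))).isLt
      omega
    have hπz : (π (π.symm ⟨n - 1, hn0⟩) : ℕ) = n - 1 := by
      rw [Equiv.apply_symm_apply]
    have hzx : ∀ a, x a ≠ π.symm ⟨n - 1, hn0⟩ := by
      intro a hax
      have h1 : (π (x a) : ℕ) = n - 1 := by rw [hax, hπz]
      have h2 := hmax a
      omega
    obtain ⟨i, hik, h1, h2⟩ := exists_gap x hx _ hzx
    refine hbox (i, k) (htop i hik) (π.symm ⟨n - 1, hn0⟩) ⟨h1, h2, ?_, ?_⟩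
    · rw [valOf_of τ x π hk le_rfl, hπz]
      omega
    · rw [valOf_top τ x π (by omega), hπz]
      omega
  refine ⟨x, hx, ?_, ?_⟩
  · intro a b
    exact (core_ord τ π hk x hx.injective hm a b).mpr (hord a b)
  · rintro r' ⟨r, hrR, rfl⟩ z
    obtain ⟨ha, hb⟩ := hR r hrR
    exact (core_box τ π hk x hx.injective hm ha hb).mp (fun w => hbox r hrR w) z

set_option maxHeartbeats 1000000 in
lemma occurs_bwd {k n : ℕ} (τ : Equiv.Perm (Fin k)) (R : Set (ℕ × ℕ))
    (hR : ∀ r ∈ R, r.1 ≤ k ∧ r.2 ≤ k)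
    (htop : ∀ i ≤ k, (i, k) ∈ R) (π : Equiv.Perm (Fin n)) (hk : 1 ≤ k)
    (h : MeshOccursIn (finRotate k * τ)
      ((fun r : ℕ × ℕ => (r.1, (r.2 + 1) % (k + 1))) '' R) (finRotate n * π)) :
    MeshOccursIn τ R π := by
  obtain ⟨x, hx, hord, hbox⟩ := h
  have hk1 : k - 1 < k := by omega
  have hmin : ∀ a : Fin k,
      ((finRotate n * π) (x (τ.symm ⟨k - 1, hk1⟩)) : ℕ) ≤ ((finRotate n * π) (x a) : ℕ) := by
    intro a
    by_contra h
    have hlt : (finRotate n * π) (x a) < (finRotate n * π) (x (τ.symm ⟨k - 1, hk1⟩)) := by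
      rw [Fin.lt_def]; omega
    have h2 := (hord _ _).mp hlt
    have h3 : ((finRotate k * τ) (τ.symm ⟨k - 1, hk1⟩) : ℕ) = 0 := by
      rw [Equiv.Perm.mul_apply, Equiv.apply_symm_apply, finRotate_val]
      show (if (k - 1) + 1 = k then 0 else (k - 1) + 1) = 0
      rw [if_pos (by omega)]
    rw [Fin.lt_def, h3] at h2
    omega
  have hn1 : 1 ≤ n := (x (τ.symm ⟨k - 1, hk1⟩)).pos
  have hn0' : (0 : ℕ) < n := by omega
  have hσm : ((finRotate n * π) (x (τ.symm ⟨k - 1, hk1⟩)) : ℕ) = 0 := by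
    by_contra hc
    have hσz : ((finRotate n * π) ((finRotate n * π).symm ⟨0, hn0'⟩) : ℕ) = 0 := by
      rw [Equiv.apply_symm_apply]
    have hzx : ∀ a, x a ≠ (finRotate n * π).symm ⟨0, hn0'⟩ := by
      intro a hax
      have h1 : ((finRotate n * π) (x a) : ℕ) = 0 := by rw [hax, hσz]
      have h2 := hmin a
      omega
    obtain ⟨i, hik, h1, h2⟩ := exists_gap x hx _ hzx
    have hiR : ((i : ℕ), (0 : ℕ)) ∈
        ((fun r : ℕ × ℕ => (r.1, (r.2 + 1) % (k + 1))) '' R) :=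
      ⟨(i, k), htop i hik, by simp [Nat.mod_self]⟩
    refine hbox (i, 0) hiR ((finRotate n * π).symm ⟨0, hn0'⟩) ⟨h1, h2, ?_, ?_⟩
    · rw [valOf_zero]; omega
    · rw [valOf_of _ x _ le_rfl hk, rot_symm_zero τ hk, hσz]
      omega
  have hm : (π (x (τ.symm ⟨k - 1, hk1⟩)) : ℕ) + 1 = n := by
    have h1 : ((finRotate n * π) (x (τ.symm ⟨k - 1, hk1⟩)) : ℕ) =
        if (π (x (τ.symm ⟨k - 1, hk1⟩)) : ℕ) + 1 = n then 0
        else (π (x (τ.symm ⟨k - 1, hk1⟩)) : ℕ) + 1 := by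
      rw [Equiv.Perm.mul_apply, finRotate_val]
    rw [hσm] at h1
    by_cases hc : (π (x (τ.symm ⟨k - 1, hk1⟩)) : ℕ) + 1 = n
    · exact hc
    · rw [if_neg hc] at h1
      omega
  refine ⟨x, hx, ?_, ?_⟩
  · intro a b
    exact (core_ord τ π hk x hx.injective hm a b).mp (hord a b)
  · intro r hrR z
    obtain ⟨ha, hb⟩ := hR r hrR
    exact (core_box τ π hk x hx.injective hm ha hb).mpr
      (fun w => hbox (r.1, (r.2 + 1) % (k + 1)) ⟨r, hrR, rfl⟩ w) z

lemma occurs_iff {k n : ℕ} (τ : Equiv.Perm (Fin k)) (R : Set (ℕ × ℕ))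
    (hR : ∀ r ∈ R, r.1 ≤ k ∧ r.2 ≤ k)
    (htop : ∀ i ≤ k, (i, k) ∈ R) (π : Equiv.Perm (Fin n)) :
    MeshOccursIn τ R π ↔
      MeshOccursIn (finRotate k * τ)
        ((fun r : ℕ × ℕ => (r.1, (r.2 + 1) % (k + 1))) '' R) (finRotate n * π) := by
  rcases Nat.eq_zero_or_pos k with hk0 | hk
  · subst hk0
    have h00 : ((0 : ℕ), (0 : ℕ)) ∈ R := htop 0 le_rfl
    have h00' : ((0 : ℕ), (0 : ℕ)) ∈
        ((fun r : ℕ × ℕ => (r.1, (r.2 + 1) % (0 + 1))) '' R) := ⟨(0, 0), h00, rfl⟩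
    rw [occurs_zero τ R h00 π, occurs_zero _ _ h00' _]
  · exact ⟨occurs_fwd τ R hR htop π hk, occurs_bwd τ R hR htop π hk⟩

theorem upShift_wilf_equivalence {k : ℕ} (τ : Equiv.Perm (Fin k)) (R : Set (ℕ × ℕ))
    (hR : ∀ r ∈ R, r.1 ≤ k ∧ r.2 ≤ k)
    (htop : ∀ i ≤ k, (i, k) ∈ R) :
    (∀ (n : ℕ) (π : Equiv.Perm (Fin n)),
        MeshAvoids τ R π ↔
          MeshAvoids (finRotate k * τ)
            ((fun r : ℕ × ℕ => (r.1, (r.2 + 1) % (k + 1))) '' R) (finRotate n * π)) ∧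
    ∀ n : ℕ,
      Nat.card {π : Equiv.Perm (Fin n) // MeshAvoids τ R π} =
        Nat.card {π : Equiv.Perm (Fin n) //
          MeshAvoids (finRotate k * τ)
            ((fun r : ℕ × ℕ => (r.1, (r.2 + 1) % (k + 1))) '' R) π} := by
  have main : ∀ (n : ℕ) (π : Equiv.Perm (Fin n)),
      MeshAvoids τ R π ↔
        MeshAvoids (finRotate k * τ)
          ((fun r : ℕ × ℕ => (r.1, (r.2 + 1) % (k + 1))) '' R) (finRotate n * π) :=
    fun n π => not_congr (occurs_iff τ R hR htop π)
  refine ⟨main, fun n => Nat.card_congr ?_⟩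
  exact Equiv.subtypeEquiv (Equiv.mulLeft (finRotate n)) (fun π => main n π)
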